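/- If U, V, A, F, Q, E are real numbers and for λ>0 one sets u = exp(U/λ), v = exp(V/λ), a = exp(A/λ), f = exp(F/λ), q = exp(Q/λ), ε = exp(E/λ), then λ·log of the expression (ε⁻¹u + au + afqv/(u+q)) / (ε⁻¹ + au + afv/(u+q)) converges as λ→0+ to max(U−E, A+U, A+F+Q+V−max(U,Q)) − max(−E, A+U, A+F+V−max(U,Q)). -/
import Mathlib


open Filter Real Set

-- λ log (sum of 5 exponentials) → max of exponents, as λ → 0+
lemma tendsto_llog5 (a b c d e : ℝ) :
    Tendsto (fun l : ℝ => l * Real.log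
        (Real.exp (a / l) + Real.exp (b / l) + Real.exp (c / l)
          + Real.exp (d / l) + Real.exp (e / l)))
      (nhdsWithin 0 (Set.Ioi 0))
      (nhds (max a (max b (max c (max d e))))) := by
  set M := max a (max b (max c (max d e))) with hM
  have hle : ∀ x ∈ ({a,b,c,d,e} : Set ℝ), x ≤ M := by
    intro x hx
    simp only [Set.mem_insert_iff, Set.mem_singleton_iff] at hx
    rcases hx with rfl|rfl|rfl|rfl|rfl <;> simp [hM, le_max_iff, le_refl, le_max_left, le_max_right]
  apply tendsto_of_tendsto_of_tendsto_of_le_of_le'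
    (g := fun _ : ℝ => M) (h := fun l : ℝ => M + l * Real.log 5)
  · exact tendsto_const_nhds
  · have : Tendsto (fun l : ℝ => l * Real.log 5) (nhdsWithin 0 (Set.Ioi 0)) (nhds 0) := by
      have h0 : Tendsto (fun l : ℝ => l) (nhdsWithin 0 (Set.Ioi 0)) (nhds 0) :=
        tendsto_id.mono_left nhdsWithin_le_nhds
      simpa using h0.mul_const (Real.log 5)
    simpa using tendsto_const_nhds.add this
  · filter_upwards [self_mem_nhdsWithin] with l hl
    have hl : (0:ℝ) < l := hl
    set S := Real.exp (a / l) + Real.exp (b / l) + Real.exp (c / l)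
      + Real.exp (d / l) + Real.exp (e / l) with hS
    have hSpos : 0 < S := by positivity
    have key : ∀ x ∈ ({a,b,c,d,e} : Set ℝ), x ≤ l * Real.log S := by
      intro x hx
      have hxS : Real.exp (x / l) ≤ S := by
        simp only [Set.mem_insert_iff, Set.mem_singleton_iff] at hx
        have p1 := Real.exp_pos (a/l); have p2 := Real.exp_pos (b/l)
        have p3 := Real.exp_pos (c/l); have p4 := Real.exp_pos (d/l)
        have p5 := Real.exp_pos (e/l)
        rcases hx with rfl|rfl|rfl|rfl|rfl <;> simp only [hS] <;> linarith
      have := (Real.le_log_iff_exp_le hSpos).2 hxS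
      calc x = l * (x / l) := by field_simp
        _ ≤ l * Real.log S := by exact mul_le_mul_of_nonneg_left this hl.le
    have : M ≤ l * Real.log S := by
      simp only [hM, max_le_iff]
      refine ⟨key a (by simp), key b (by simp), key c (by simp), key d (by simp), key e (by simp)⟩
    exact this
  · filter_upwards [self_mem_nhdsWithin] with l hl
    have hl : (0:ℝ) < l := hl
    set S := Real.exp (a / l) + Real.exp (b / l) + Real.exp (c / l)
      + Real.exp (d / l) + Real.exp (e / l) with hS
    have hSpos : 0 < S := by positivity
    have hub : S ≤ 5 * Real.exp (M / l) := by
      have : ∀ x ∈ ({a,b,c,d,e} : Set ℝ), Real.exp (x / l) ≤ Real.exp (M / l) := by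
        intro x hx
        exact Real.exp_le_exp.2 (div_le_div_of_nonneg_right (hle x hx) hl.le |>.trans_eq rfl)
      have h1 := this a (by simp); have h2 := this b (by simp)
      have h3 := this c (by simp); have h4 := this d (by simp)
      have h5 := this e (by simp)
      simp only [hS]; linarith
    have hlog : Real.log S ≤ Real.log 5 + M / l := by
      have := Real.log_le_log hSpos hub
      rwa [Real.log_mul (by norm_num) (Real.exp_ne_zero _), Real.log_exp] at this
    calc l * Real.log S ≤ l * (Real.log 5 + M / l) :=
          mul_le_mul_of_nonneg_left hlog hl.le
      _ = M + l * Real.log 5 := by field_simp; ring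

set_option maxHeartbeats 1000000 in
theorem ultradiscrete_oregonator_u_step (U V A F Q E : ℝ) :
    Tendsto (fun l : ℝ =>
        l * Real.log
          (((Real.exp (E / l))⁻¹ * Real.exp (U / l) +
              Real.exp (A / l) * Real.exp (U / l) +
              Real.exp (A / l) * Real.exp (F / l) * Real.exp (Q / l) * Real.exp (V / l) /
                (Real.exp (U / l) + Real.exp (Q / l))) /
            ((Real.exp (E / l))⁻¹ +
              Real.exp (A / l) * Real.exp (U / l) +
              Real.exp (A / l) * Real.exp (F / l) * Real.exp (V / l) /
                (Real.exp (U / l) + Real.exp (Q / l)))))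
      (nhdsWithin 0 (Set.Ioi 0))
      (nhds (max (U - E) (max (A + U) (A + F + Q + V - max U Q)) -
             max (-E) (max (A + U) (A + F + V - max U Q)))) := by
  have h1 := tendsto_llog5 (2*U-E) (U+Q-E) (A+2*U) (A+U+Q) (A+F+Q+V)
  have h2 := tendsto_llog5 (U-E) (Q-E) (A+2*U) (A+U+Q) (A+F+V)
  have hmain := h1.sub h2
  have hlim : max (2*U-E) (max (U+Q-E) (max (A+2*U) (max (A+U+Q) (A+F+Q+V)))) -
      max (U-E) (max (Q-E) (max (A+2*U) (max (A+U+Q) (A+F+V)))) =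
      max (U - E) (max (A + U) (A + F + Q + V - max U Q)) -
        max (-E) (max (A + U) (A + F + V - max U Q)) := by
    have e1 : max (2*U-E) (max (U+Q-E) (max (A+2*U) (max (A+U+Q) (A+F+Q+V)))) =
        max (U - E) (max (A + U) (A + F + Q + V - max U Q)) + max U Q := by
      rw [← max_add_add_right, ← max_add_add_right, sub_add_cancel,
          ← max_add_add_left, ← max_add_add_left]
      ring_nf
      simp [max_comm, max_assoc, max_left_comm]
    have e2 : max (U-E) (max (Q-E) (max (A+2*U) (max (A+U+Q) (A+F+V)))) =
        max (-E) (max (A + U) (A + F + V - max U Q)) + max U Q := by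
      rw [← max_add_add_right, ← max_add_add_right, sub_add_cancel,
          ← max_add_add_left, ← max_add_add_left]
      ring_nf
      simp [max_comm, max_assoc, max_left_comm]
    rw [e1, e2]; ring
  rw [← hlim]
  apply hmain.congr'
  filter_upwards [self_mem_nhdsWithin] with l hl
  have hl : (0:ℝ) < l := hl
  have hs : (0:ℝ) < Real.exp (U / l) + Real.exp (Q / l) := by positivity
  have hinv : (Real.exp (E / l))⁻¹ = Real.exp ((-E) / l) := by
    rw [← Real.exp_neg, neg_div]
  have hnum : (Real.exp (E / l))⁻¹ * Real.exp (U / l) +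
      Real.exp (A / l) * Real.exp (U / l) +
      Real.exp (A / l) * Real.exp (F / l) * Real.exp (Q / l) * Real.exp (V / l)
        / (Real.exp (U / l) + Real.exp (Q / l))
      = (Real.exp ((2*U-E)/l) + Real.exp ((U+Q-E)/l) + Real.exp ((A+2*U)/l)
          + Real.exp ((A+U+Q)/l) + Real.exp ((A+F+Q+V)/l))
        / (Real.exp (U / l) + Real.exp (Q / l)) := by
    rw [hinv, eq_div_iff hs.ne']
    field_simp
    ring_nf
    simp only [pow_two, ← Real.exp_add]
    ring_nf
  have hden : (Real.exp (E / l))⁻¹ +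
      Real.exp (A / l) * Real.exp (U / l) +
      Real.exp (A / l) * Real.exp (F / l) * Real.exp (V / l)
        / (Real.exp (U / l) + Real.exp (Q / l))
      = (Real.exp ((U-E)/l) + Real.exp ((Q-E)/l) + Real.exp ((A+2*U)/l)
          + Real.exp ((A+U+Q)/l) + Real.exp ((A+F+V)/l))
        / (Real.exp (U / l) + Real.exp (Q / l)) := by
    rw [hinv, eq_div_iff hs.ne']
    field_simp
    ring_nf
    simp only [pow_two, ← Real.exp_add]
    ring_nf
  have hNpos : (0:ℝ) < Real.exp ((2*U-E)/l) + Real.exp ((U+Q-E)/l) + Real.exp ((A+2*U)/l)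
      + Real.exp ((A+U+Q)/l) + Real.exp ((A+F+Q+V)/l) := by positivity
  have hDpos : (0:ℝ) < Real.exp ((U-E)/l) + Real.exp ((Q-E)/l) + Real.exp ((A+2*U)/l)
      + Real.exp ((A+U+Q)/l) + Real.exp ((A+F+V)/l) := by positivity
  have hcancel : (Real.exp ((2*U-E)/l) + Real.exp ((U+Q-E)/l) + Real.exp ((A+2*U)/l)
          + Real.exp ((A+U+Q)/l) + Real.exp ((A+F+Q+V)/l))
        / (Real.exp (U / l) + Real.exp (Q / l))
      / ((Real.exp ((U-E)/l) + Real.exp ((Q-E)/l) + Real.exp ((A+2*U)/l)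
          + Real.exp ((A+U+Q)/l) + Real.exp ((A+F+V)/l))
        / (Real.exp (U / l) + Real.exp (Q / l)))
      = (Real.exp ((2*U-E)/l) + Real.exp ((U+Q-E)/l) + Real.exp ((A+2*U)/l)
          + Real.exp ((A+U+Q)/l) + Real.exp ((A+F+Q+V)/l))
      / (Real.exp ((U-E)/l) + Real.exp ((Q-E)/l) + Real.exp ((A+2*U)/l)
          + Real.exp ((A+U+Q)/l) + Real.exp ((A+F+V)/l)) := by
    field_simp
  rw [hnum, hden, hcancel, Real.log_div hNpos.ne' hDpos.ne', mul_sub]
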